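/- There exists a universal constant C > 0 such that for every l > 0 and every θ₀ ∈ ℝ, ∫₀^{2l} ∫₀^{2π} |1 − e^{l−t} e^{i(θ−θ₀)}|^{−3/2} dθ dt ≤ C(l + 1); equivalently, the L^{3/2} norm of the kernel (t,θ) ↦ (1 − e^{l−t}e^{i(θ−θ₀)})^{−1} on [0,2l] × [0,2π] is at most (C(l+1))^{2/3}. -/

import Mathlib

open Real MeasureTheory intervalIntegral

namespace CauchyKernelAux

/-- The angular comparison kernel. -/
noncomputable def F (φ : ℝ) : ℝ := |Real.sin (φ / 2)| ^ (-(3/4) : ℝ)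

lemma F_nonneg (φ : ℝ) : 0 ≤ F φ := Real.rpow_nonneg (abs_nonneg _) _

lemma F_meas : Measurable F := by unfold F; measurability

lemma F_periodic : Function.Periodic F (2 * π) := by
  intro x
  unfold F
  rw [show (x + 2 * π) / 2 = x / 2 + π by ring, Real.sin_add_pi, abs_neg]

lemma F_even (x : ℝ) : F (-x) = F x := by
  unfold F
  rw [show -x / 2 = -(x / 2) by ring, Real.sin_neg, abs_neg]

lemma rpow_II (a b : ℝ) : IntervalIntegrable (fun x : ℝ => x ^ (-(3/4) : ℝ)) volume a b :=
  intervalIntegral.intervalIntegrable_rpow' (by norm_num)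

lemma inv_rpow_neg34 {x : ℝ} (hx : 0 < x) : (x⁻¹) ^ (-(3/4) : ℝ) = x ^ ((3:ℝ)/4) := by
  rw [Real.inv_rpow hx.le, Real.rpow_neg hx.le, inv_inv]

lemma F_II_half : IntervalIntegrable F volume 0 π := by
  have hπ := Real.pi_pos
  apply IntervalIntegrable.mono_fun' ((rpow_II 0 π).const_mul (π ^ ((3:ℝ)/4)))
    F_meas.aestronglyMeasurable.restrict
  rw [Filter.EventuallyLE, ae_restrict_iff' measurableSet_uIoc]
  refine Filter.Eventually.of_forall fun x hx => ?_
  rw [Set.uIoc_of_le hπ.le] at hx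
  obtain ⟨hx0, hxπ⟩ := hx
  have hsin : x / π ≤ Real.sin (x / 2) := by
    have h := Real.mul_le_sin (x := x / 2) (by linarith) (by linarith)
    calc x / π = 2 / π * (x / 2) := by ring
      _ ≤ Real.sin (x / 2) := h
  have hxp : 0 < x / π := by positivity
  have hle : x / π ≤ |Real.sin (x / 2)| := hsin.trans (le_abs_self _)
  have key : F x ≤ π ^ ((3:ℝ)/4) * x ^ (-(3/4) : ℝ) := by
    calc F x ≤ (x / π) ^ (-(3/4) : ℝ) :=
          Real.rpow_le_rpow_of_nonpos hxp hle (by norm_num)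
      _ = π ^ ((3:ℝ)/4) * x ^ (-(3/4) : ℝ) := by
          rw [div_eq_mul_inv, Real.mul_rpow hx0.le (inv_nonneg.mpr hπ.le),
            inv_rpow_neg34 hπ]
          ring
  rw [Real.norm_eq_abs, abs_of_nonneg (F_nonneg x)]
  exact key

lemma F_II_neg : IntervalIntegrable F volume (-π) 0 := by
  have h := F_II_half.comp_sub_left 0
  have he : (fun x : ℝ => F (0 - x)) = F := funext fun x => by rw [zero_sub, F_even]
  rw [he] at h
  simpa using h.symm

lemma F_II_Icc (k : ℤ) : IntervalIntegrable F volume (2*π*k - π) (2*π*k + π) := by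
  have h := (F_II_neg.trans F_II_half).comp_sub_right ((k : ℝ) * (2*π))
  have he : (fun x : ℝ => F (x - (k:ℝ) * (2*π))) = F :=
    funext fun x => F_periodic.sub_int_mul_eq k
  rw [he] at h
  convert h using 1 <;> ring

lemma F_II_window (a : ℝ) : IntervalIntegrable F volume a (a + 2*π) := by
  have hπ := Real.pi_pos
  set k : ℤ := ⌊(a + π) / (2*π)⌋ with hk
  have hk1 : 2*π*(k:ℝ) ≤ a + π := by
    have h := Int.floor_le ((a + π)/(2*π))
    calc 2*π*(k:ℝ) = (k:ℝ) * (2*π) := by ring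
      _ ≤ ((a+π)/(2*π)) * (2*π) := mul_le_mul_of_nonneg_right h (by positivity)
      _ = a + π := by field_simp
  have hk2 : a + π < 2*π*(k:ℝ) + 2*π := by
    have h := Int.lt_floor_add_one ((a + π)/(2*π))
    calc a + π = ((a+π)/(2*π)) * (2*π) := by field_simp
      _ < ((k:ℝ)+1) * (2*π) := mul_lt_mul_of_pos_right h (by positivity)
      _ = 2*π*(k:ℝ) + 2*π := by ring
  have h2 : IntervalIntegrable F volume (2*π*(k:ℝ) + π) (2*π*(k:ℝ) + 3*π) := by
    have h := F_II_Icc (k+1)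
    have e1 : 2*π*((k+1:ℤ):ℝ) - π = 2*π*(k:ℝ) + π := by push_cast; ring
    have e2 : 2*π*((k+1:ℤ):ℝ) + π = 2*π*(k:ℝ) + 3*π := by push_cast; ring
    rwa [e1, e2] at h
  have hbig := (F_II_Icc k).trans h2
  apply hbig.mono_set
  rw [Set.uIcc_of_le (by linarith), Set.uIcc_of_le (by linarith)]
  exact Set.Icc_subset_Icc (by linarith) (by linarith)

noncomputable def CF : ℝ := ∫ x in (-π)..π, F x

lemma CF_nonneg : 0 ≤ CF :=
  intervalIntegral.integral_nonneg (by linarith [Real.pi_pos]) fun x _ => F_nonneg x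

lemma shift_integral (θ₀ : ℝ) : (∫ θ in (0:ℝ)..(2*π), F (θ - θ₀)) = CF := by
  rw [intervalIntegral.integral_comp_sub_right F θ₀]
  have h := F_periodic.intervalIntegral_add_eq (0 - θ₀) (-π)
  rw [show (0 - θ₀ + 2*π) = 2*π - θ₀ by ring, show (-π + 2*π) = π by ring] at h
  rw [h]; rfl

lemma norm_sq_eq (s φ : ℝ) :
    ‖1 - Complex.exp ((s:ℂ)) * Complex.exp (Complex.I * (φ:ℂ))‖ ^ 2
      = (Real.exp s - 1) ^ 2 + 4 * Real.exp s * Real.sin (φ / 2) ^ 2 := by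
  have h2 : Complex.exp ((s:ℂ)) * Complex.exp (Complex.I * (φ:ℂ))
      = (↑(Real.exp s * Real.cos φ) : ℂ) + (↑(Real.exp s * Real.sin φ) : ℂ) * Complex.I := by
    rw [mul_comm Complex.I, Complex.exp_mul_I, ← Complex.ofReal_exp, ← Complex.ofReal_cos,
      ← Complex.ofReal_sin]
    push_cast
    ring
  have h3 : (1 : ℂ) - ((↑(Real.exp s * Real.cos φ) : ℂ) + (↑(Real.exp s * Real.sin φ) : ℂ) * Complex.I)
      = (↑(1 - Real.exp s * Real.cos φ) : ℂ) + (↑(-(Real.exp s * Real.sin φ)) : ℂ) * Complex.I := by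
    push_cast; ring
  rw [h2, h3, Complex.sq_norm, Complex.normSq_add_mul_I]
  have hhalf : Real.sin (φ/2) ^ 2 = 1/2 - Real.cos (2 * (φ/2)) / 2 := Real.sin_sq_eq_half_sub _
  rw [show 2 * (φ/2) = φ by ring] at hhalf
  rw [hhalf]
  linear_combination (Real.exp s) ^ 2 * Real.sin_sq_add_cos_sq φ

lemma A_large (s : ℝ) (h : 1 < |s|) : (1:ℝ)/2 ≤ |Real.exp s - 1| := by
  have he2 : (2:ℝ) ≤ Real.exp 1 := by nlinarith [Real.add_one_le_exp (1:ℝ)]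
  rcases lt_abs.mp h with h1 | h1
  · have hx : Real.exp 1 ≤ Real.exp s := Real.exp_le_exp.mpr h1.le
    rw [abs_of_nonneg (by nlinarith : (0:ℝ) ≤ Real.exp s - 1)]
    linarith
  · have hs : s ≤ -1 := by linarith
    have hx : Real.exp s ≤ Real.exp (-1) := Real.exp_le_exp.mpr hs
    have hmul : Real.exp (-1) * Real.exp 1 = 1 := by
      rw [← Real.exp_add]; norm_num
    have h2 : Real.exp (-1) ≤ 1/2 := by nlinarith [Real.exp_pos (-1)]
    rw [abs_of_nonpos (by nlinarith [Real.exp_pos s] : Real.exp s - 1 ≤ 0)]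
    linarith

lemma half_rpow_le {y : ℝ} (hy : -2 ≤ y) (_hy' : y ≤ 0) : ((1:ℝ)/2) ^ y ≤ 4 := by
  have e1 : ((1:ℝ)/2) ^ y ≤ ((1:ℝ)/2) ^ (-(2:ℝ)) :=
    Real.rpow_le_rpow_of_exponent_ge (by norm_num) (by norm_num) (by linarith)
  have e2 : ((1:ℝ)/2) ^ (-(2:ℝ)) = 4 := by
    rw [show (-(2:ℝ)) = ((-2:ℤ):ℝ) by norm_num, Real.rpow_intCast]
    norm_num
  linarith

lemma pointwise_bound (s φ : ℝ) (hs : s ≠ 0) (hφ : Real.sin (φ/2) ≠ 0) :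
    ‖1 - Complex.exp ((s:ℂ)) * Complex.exp (Complex.I * (φ:ℂ))‖ ^ (-(3/2) : ℝ)
      ≤ 2 * |Real.exp s - 1| ^ (-(3/4) : ℝ) * F φ + 4 := by
  set D : ℝ := ‖1 - Complex.exp ((s:ℂ)) * Complex.exp (Complex.I * (φ:ℂ))‖ with hD
  have hD0 : 0 ≤ D := norm_nonneg _
  set A : ℝ := |Real.exp s - 1| with hA
  set B : ℝ := |Real.sin (φ/2)| with hB
  have hApos : 0 < A := abs_pos.mpr (sub_ne_zero.mpr fun h => hs ((Real.exp_eq_one_iff s).mp h))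
  have hBpos : 0 < B := abs_pos.mpr hφ
  have hsin2 : Real.sin (φ/2) ^ 2 = B ^ 2 := (sq_abs _).symm
  have hsq : D ^ 2 = A ^ 2 + 4 * Real.exp s * B ^ 2 := by
    rw [hD, norm_sq_eq, hA, ← sq_abs (Real.exp s - 1), hsin2]
  have hFB : F φ = B ^ (-(3/4) : ℝ) := rfl
  have hterm : 0 ≤ A ^ (-(3/4) : ℝ) * F φ :=
    mul_nonneg (Real.rpow_nonneg hApos.le _) (F_nonneg φ)
  have hDpos : 0 < D := by
    rcases eq_or_lt_of_le hD0 with h | h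
    · exfalso; nlinarith [Real.exp_pos s, sq_nonneg B]
    · exact h
  have hDsplit : D ^ (-(3/2) : ℝ) = (D ^ 2) ^ (-(3/4) : ℝ) := by
    rw [← Real.rpow_natCast D 2, ← Real.rpow_mul hD0]
    norm_num
  rcases le_or_gt |s| 1 with hs1 | hs1
  · -- |s| ≤ 1
    have h1 : -1 ≤ s := (abs_le.mp hs1).1
    have h2 : Real.exp (-1) ≤ Real.exp s := Real.exp_le_exp.mpr h1
    have h3 : Real.exp 1 ≤ 4 := by nlinarith [Real.exp_one_lt_d9]
    have h4 : Real.exp (-1) * Real.exp 1 = 1 := by rw [← Real.exp_add]; norm_num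
    have hexp : (1:ℝ)/4 ≤ Real.exp s := by nlinarith [Real.exp_pos (-1), Real.exp_pos 1]
    have hge : 2 * (A * B) ≤ D ^ 2 := by
      rw [hsq]; nlinarith [sq_nonneg (A - B), sq_nonneg B]
    have hABpos : 0 < A * B := mul_pos hApos hBpos
    have hc : D ^ (-(3/2) : ℝ) ≤ A ^ (-(3/4) : ℝ) * B ^ (-(3/4) : ℝ) := by
      calc D ^ (-(3/2) : ℝ) = (D ^ 2) ^ (-(3/4) : ℝ) := hDsplit
        _ ≤ (2 * (A * B)) ^ (-(3/4) : ℝ) :=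
            Real.rpow_le_rpow_of_nonpos (by linarith) hge (by norm_num)
        _ ≤ (A * B) ^ (-(3/4) : ℝ) :=
            Real.rpow_le_rpow_of_nonpos hABpos (by linarith) (by norm_num)
        _ = A ^ (-(3/4) : ℝ) * B ^ (-(3/4) : ℝ) := Real.mul_rpow hApos.le hBpos.le
    rw [hFB]
    nlinarith [Real.rpow_nonneg hApos.le (-(3/4) : ℝ), Real.rpow_nonneg hBpos.le (-(3/4) : ℝ)]
  · -- |s| > 1
    have hA12 : (1:ℝ)/2 ≤ A := A_large s hs1
    have hA2D2 : A ^ 2 ≤ D ^ 2 := by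
      rw [hsq]; nlinarith [Real.exp_pos s, sq_nonneg B]
    have hAD : A ≤ D := by nlinarith
    have hc : D ^ (-(3/2) : ℝ) ≤ ((1:ℝ)/2) ^ (-(3/2) : ℝ) :=
      Real.rpow_le_rpow_of_nonpos (by norm_num) (hA12.trans hAD) (by norm_num)
    have h4 : ((1:ℝ)/2) ^ (-(3/2) : ℝ) ≤ 4 := half_rpow_le (by norm_num) (by norm_num)
    linarith

lemma g_bound (s : ℝ) (hs : s ≠ 0) :
    |Real.exp s - 1| ^ (-(3/4) : ℝ) ≤ Real.exp 1 * |s| ^ (-(3/4) : ℝ) + 2 := by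
  have hsabs : 0 < |s| := abs_pos.mpr hs
  have hE1 : (1:ℝ) ≤ Real.exp 1 := by nlinarith [Real.add_one_le_exp (1:ℝ)]
  rcases le_or_gt |s| 1 with h1 | h1
  · have hlow : |s| / Real.exp 1 ≤ |Real.exp s - 1| := by
      rcases lt_or_gt_of_ne hs with hneg | hpos
      · -- s < 0
        have hin : -1 ≤ s := (abs_le.mp h1).1
        have h2 : -s + 1 ≤ Real.exp (-s) := Real.add_one_le_exp _
        have hmul : Real.exp (-s) * Real.exp s = 1 := by rw [← Real.exp_add]; norm_num
        have hkey : (-s) * Real.exp s ≤ 1 - Real.exp s := by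
          nlinarith [Real.exp_pos s]
        have hexpge : (Real.exp 1)⁻¹ ≤ Real.exp s := by
          rw [← Real.exp_neg]
          exact Real.exp_le_exp.mpr hin
        have habs : |s| = -s := abs_of_neg hneg
        have hA : |Real.exp s - 1| = 1 - Real.exp s := by
          rw [abs_of_nonpos]; · ring
          nlinarith [Real.exp_lt_one_iff.mpr hneg]
        rw [habs, hA, div_eq_mul_inv]
        have : (-s) * (Real.exp 1)⁻¹ ≤ (-s) * Real.exp s :=
          mul_le_mul_of_nonneg_left hexpge (by linarith)
        linarith
      · -- s > 0
        have h2 : s + 1 ≤ Real.exp s := Real.add_one_le_exp _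
        have habs : |s| = s := abs_of_pos hpos
        have hA : |Real.exp s - 1| = Real.exp s - 1 := abs_of_nonneg (by linarith)
        rw [habs, hA]
        have : s / Real.exp 1 ≤ s := div_le_self hpos.le hE1
        linarith
    have hlowpos : 0 < |s| / Real.exp 1 := by positivity
    calc |Real.exp s - 1| ^ (-(3/4) : ℝ) ≤ (|s| / Real.exp 1) ^ (-(3/4) : ℝ) :=
          Real.rpow_le_rpow_of_nonpos hlowpos hlow (by norm_num)
      _ = |s| ^ (-(3/4) : ℝ) * (Real.exp 1) ^ ((3:ℝ)/4) := by
          rw [div_eq_mul_inv, Real.mul_rpow (abs_nonneg _) (inv_nonneg.mpr (Real.exp_pos 1).le),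
            inv_rpow_neg34 (Real.exp_pos 1)]
      _ ≤ |s| ^ (-(3/4) : ℝ) * Real.exp 1 := by
          apply mul_le_mul_of_nonneg_left _ (Real.rpow_nonneg (abs_nonneg _) _)
          nth_rewrite 2 [← Real.rpow_one (Real.exp 1)]
          exact Real.rpow_le_rpow_of_exponent_le hE1 (by norm_num)
      _ ≤ Real.exp 1 * |s| ^ (-(3/4) : ℝ) + 2 := by
          rw [mul_comm]; linarith
  · have hA12 := A_large s h1
    have hc : |Real.exp s - 1| ^ (-(3/4) : ℝ) ≤ ((1:ℝ)/2) ^ (-(3/4) : ℝ) :=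
      Real.rpow_le_rpow_of_nonpos (by norm_num) hA12 (by norm_num)
    have h4 : ((1:ℝ)/2) ^ (-(3/4) : ℝ) ≤ 4 := half_rpow_le (by norm_num) (by norm_num)
    have h2 : ((1:ℝ)/2) ^ (-(3/4) : ℝ) ≤ 2 := by
      have e1 : ((1:ℝ)/2) ^ (-(3/4) : ℝ) ≤ ((1:ℝ)/2) ^ (-(1:ℝ)) :=
        Real.rpow_le_rpow_of_exponent_ge (by norm_num) (by norm_num) (by norm_num)
      have e2 : ((1:ℝ)/2) ^ (-(1:ℝ)) = 2 := by
        rw [show (-(1:ℝ)) = ((-1:ℤ):ℝ) by norm_num, Real.rpow_intCast]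
        norm_num
      linarith
    have : 0 ≤ Real.exp 1 * |s| ^ (-(3/4) : ℝ) :=
      mul_nonneg (Real.exp_pos 1).le (Real.rpow_nonneg (abs_nonneg _) _)
    linarith

lemma inner_bound (s θ₀ : ℝ) (hs : s ≠ 0) :
    (∫ θ in (0:ℝ)..(2 * π),
        ‖1 - Complex.exp ((s:ℂ)) * Complex.exp (Complex.I * (((θ - θ₀ : ℝ)) : ℂ))‖ ^ (-(3/2) : ℝ))
      ≤ 2 * |Real.exp s - 1| ^ (-(3/4) : ℝ) * CF + 8 * π := by
  have hπ := Real.pi_pos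
  set gA : ℝ := |Real.exp s - 1| ^ (-(3/4) : ℝ) with hgA
  have hgA0 : 0 ≤ gA := Real.rpow_nonneg (abs_nonneg _) _
  have hFshift : IntervalIntegrable (fun θ : ℝ => F (θ - θ₀)) volume 0 (2*π) := by
    have h := (F_II_window (-θ₀)).comp_sub_right θ₀
    have e1 : -θ₀ + θ₀ = (0:ℝ) := by ring
    have e2 : -θ₀ + 2*π + θ₀ = 2*π := by ring
    rwa [e1, e2] at h
  have hRII : IntervalIntegrable (fun θ : ℝ => 2 * gA * F (θ - θ₀) + 4) volume 0 (2*π) :=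
    (hFshift.const_mul (2 * gA)).add intervalIntegrable_const
  have hae : ∀ᵐ θ : ℝ,
      ‖1 - Complex.exp ((s:ℂ)) * Complex.exp (Complex.I * (((θ - θ₀ : ℝ)) : ℂ))‖ ^ (-(3/2) : ℝ)
        ≤ 2 * gA * F (θ - θ₀) + 4 := by
    have hnull : volume {θ : ℝ | Real.sin ((θ - θ₀)/2) = 0} = 0 := by
      refine measure_mono_null ?_
        ((Set.countable_range fun n : ℤ => θ₀ + (n:ℝ) * (2*π)).measure_zero _)
      intro θ hθ
      obtain ⟨n, hn⟩ := Real.sin_eq_zero_iff.mp hθ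
      exact ⟨n, by linear_combination 2 * hn⟩
    have hae0 : ∀ᵐ θ : ℝ, Real.sin ((θ - θ₀)/2) ≠ 0 := by
      rw [ae_iff]
      simpa only [ne_eq, not_not] using hnull
    filter_upwards [hae0] with θ hθ
    exact pointwise_bound s (θ - θ₀) hs hθ
  have hval : (∫ θ in (0:ℝ)..(2*π), (2 * gA * F (θ - θ₀) + 4)) = 2 * gA * CF + 8 * π := by
    rw [intervalIntegral.integral_add (hFshift.const_mul (2 * gA)) intervalIntegrable_const,
      intervalIntegral.integral_const_mul, shift_integral θ₀, intervalIntegral.integral_const]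
    simp [smul_eq_mul]
    ring
  by_cases hf : IntervalIntegrable (fun θ : ℝ =>
      ‖1 - Complex.exp ((s:ℂ)) * Complex.exp (Complex.I * (((θ - θ₀ : ℝ)) : ℂ))‖ ^ (-(3/2) : ℝ))
      volume 0 (2*π)
  · have hm := intervalIntegral.integral_mono_ae (by linarith : (0:ℝ) ≤ 2*π) hf hRII hae
    rw [hval] at hm
    exact hm
  · rw [intervalIntegral.integral_undef hf]
    have h0 : (0:ℝ) ≤ 2 * gA * CF + 8 * π := by
      have := CF_nonneg
      nlinarith
    linarith [h0, hval]

lemma w_meas (l : ℝ) : Measurable fun t : ℝ => |l - t| ^ (-(3/4) : ℝ) := by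
  have h0 : Measurable fun x : ℝ => |x| ^ (-(3/4) : ℝ) := by measurability
  exact h0.comp (measurable_const.sub measurable_id)

lemma abs_rpow_II_left (l : ℝ) (hl : 0 < l) :
    IntervalIntegrable (fun t : ℝ => |l - t| ^ (-(3/4) : ℝ)) volume 0 l := by
  have h : IntervalIntegrable (fun x : ℝ => (l - x) ^ (-(3/4) : ℝ)) volume 0 l := by
    have h0 := (rpow_II 0 l).comp_sub_left l
    simpa using h0.symm
  apply h.mono_fun (w_meas l).aestronglyMeasurable.restrict
  rw [Filter.EventuallyLE, ae_restrict_iff' measurableSet_uIoc]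
  refine Filter.Eventually.of_forall fun x hx => ?_
  rw [Set.uIoc_of_le hl.le] at hx
  have e : |l - x| = l - x := abs_of_nonneg (by linarith [hx.2])
  show ‖|l - x| ^ (-(3/4) : ℝ)‖ ≤ ‖(l - x) ^ (-(3/4) : ℝ)‖
  rw [e]

lemma abs_rpow_II_right (l : ℝ) (hl : 0 < l) :
    IntervalIntegrable (fun t : ℝ => |l - t| ^ (-(3/4) : ℝ)) volume l (2*l) := by
  have h : IntervalIntegrable (fun x : ℝ => (x - l) ^ (-(3/4) : ℝ)) volume l (2*l) := by
    have h0 := (rpow_II 0 l).comp_sub_right l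
    have e1 : (0:ℝ) + l = l := by ring
    have e2 : l + l = 2*l := by ring
    rwa [e1, e2] at h0
  apply h.mono_fun (w_meas l).aestronglyMeasurable.restrict
  rw [Filter.EventuallyLE, ae_restrict_iff' measurableSet_uIoc]
  refine Filter.Eventually.of_forall fun x hx => ?_
  rw [Set.uIoc_of_le (by linarith : l ≤ 2*l)] at hx
  have e : |l - x| = x - l := by
    rw [abs_of_nonpos (by linarith [hx.1] : l - x ≤ 0), neg_sub]
  show ‖|l - x| ^ (-(3/4) : ℝ)‖ ≤ ‖(x - l) ^ (-(3/4) : ℝ)‖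
  rw [e]

lemma abs_rpow_integral (l : ℝ) (hl : 0 < l) :
    (∫ t in (0:ℝ)..(2*l), |l - t| ^ (-(3/4) : ℝ)) = 8 * l ^ ((1:ℝ)/4) := by
  have base : (∫ x in (0:ℝ)..l, x ^ (-(3/4) : ℝ)) = 4 * l ^ ((1:ℝ)/4) := by
    rw [integral_rpow (Or.inl (by norm_num))]
    rw [Real.zero_rpow (by norm_num)]
    norm_num
    ring
  have h1 : (∫ t in (0:ℝ)..l, |l - t| ^ (-(3/4) : ℝ)) = 4 * l ^ ((1:ℝ)/4) := by
    have hcg : (∫ t in (0:ℝ)..l, |l - t| ^ (-(3/4) : ℝ))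
        = ∫ t in (0:ℝ)..l, (l - t) ^ (-(3/4) : ℝ) := by
      apply intervalIntegral.integral_congr
      intro x hx
      rw [Set.uIcc_of_le hl.le] at hx
      show |l - x| ^ (-(3/4) : ℝ) = (l - x) ^ (-(3/4) : ℝ)
      rw [abs_of_nonneg (by linarith [hx.2] : (0:ℝ) ≤ l - x)]
    rw [hcg, intervalIntegral.integral_comp_sub_left (fun x : ℝ => x ^ (-(3/4) : ℝ)) l,
      sub_self, sub_zero, base]
  have h2 : (∫ t in l..(2*l), |l - t| ^ (-(3/4) : ℝ)) = 4 * l ^ ((1:ℝ)/4) := by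
    have hcg : (∫ t in l..(2*l), |l - t| ^ (-(3/4) : ℝ))
        = ∫ t in l..(2*l), (t - l) ^ (-(3/4) : ℝ) := by
      apply intervalIntegral.integral_congr
      intro x hx
      rw [Set.uIcc_of_le (by linarith : l ≤ 2*l)] at hx
      show |l - x| ^ (-(3/4) : ℝ) = (x - l) ^ (-(3/4) : ℝ)
      rw [abs_of_nonpos (by linarith [hx.1] : l - x ≤ 0), neg_sub]
    rw [hcg, intervalIntegral.integral_comp_sub_right (fun x : ℝ => x ^ (-(3/4) : ℝ)) l,
      sub_self, show 2*l - l = l by ring, base]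
  rw [← intervalIntegral.integral_add_adjacent_intervals (abs_rpow_II_left l hl)
    (abs_rpow_II_right l hl), h1, h2]
  ring

end CauchyKernelAux

open CauchyKernelAux in
/-- The `L^{3/2}` bound for the Cauchy kernel of the annulus `{1 ≤ |z| ≤ e^{2l}}`,
expressed in cylindrical coordinates and evaluated at the mid-cylinder point:
`∫₀^{2l} ∫₀^{2π} |1 − e^{l−t} e^{i(θ−θ₀)}|^{−3/2} dθ dt ≤ C (l+1)` for a universal
constant `C > 0`. -/
theorem cauchy_kernel_L32_bound : ∃ C : ℝ, 0 < C ∧ ∀ l : ℝ, 0 < l → ∀ θ₀ : ℝ,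
    (∫ t in (0:ℝ)..(2 * l), ∫ θ in (0:ℝ)..(2 * π),
        ‖1 - Complex.exp (((l - t : ℝ) : ℂ)) *
            Complex.exp (Complex.I * (((θ - θ₀ : ℝ)) : ℂ))‖ ^ (-(3/2) : ℝ))
      ≤ C * (l + 1) := by
  have hπ := Real.pi_pos
  have hCF := CF_nonneg
  have hE0 := (Real.exp_pos 1).le
  have hC : (0:ℝ) < 16 * CF * Real.exp 1 + 8 * CF + 16 * π + 1 := by
    nlinarith [mul_nonneg (mul_nonneg (by norm_num : (0:ℝ) ≤ 16) hCF) hE0]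
  refine ⟨16 * CF * Real.exp 1 + 8 * CF + 16 * π + 1, hC, fun l hl θ₀ => ?_⟩
  have hwII : IntervalIntegrable (fun t : ℝ => |l - t| ^ (-(3/4) : ℝ)) volume 0 (2*l) :=
    (abs_rpow_II_left l hl).trans (abs_rpow_II_right l hl)
  have hψII : IntervalIntegrable
      (fun t : ℝ => 2 * CF * Real.exp 1 * (|l - t| ^ (-(3/4) : ℝ)) + (4 * CF + 8 * π))
      volume 0 (2*l) :=
    (hwII.const_mul (2 * CF * Real.exp 1)).add intervalIntegrable_const
  have hae : ∀ᵐ t : ℝ,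
      (∫ θ in (0:ℝ)..(2 * π),
          ‖1 - Complex.exp (((l - t : ℝ) : ℂ)) *
              Complex.exp (Complex.I * (((θ - θ₀ : ℝ)) : ℂ))‖ ^ (-(3/2) : ℝ))
        ≤ 2 * CF * Real.exp 1 * (|l - t| ^ (-(3/4) : ℝ)) + (4 * CF + 8 * π) := by
    have hne : ∀ᵐ t : ℝ, t ≠ l := by
      rw [ae_iff]
      have hset : {t : ℝ | ¬ t ≠ l} = {l} := by ext t; simp
      rw [hset]
      exact Real.volume_singleton
    filter_upwards [hne] with t ht
    have hs : l - t ≠ 0 := sub_ne_zero.mpr (Ne.symm ht)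
    have h1 := inner_bound (l - t) θ₀ hs
    have h2 := g_bound (l - t) hs
    have h3 : 2 * |Real.exp (l - t) - 1| ^ (-(3/4) : ℝ) * CF
        ≤ 2 * CF * Real.exp 1 * (|l - t| ^ (-(3/4) : ℝ)) + 4 * CF := by
      have h4 := mul_le_mul_of_nonneg_left h2 (by linarith : (0:ℝ) ≤ 2 * CF)
      nlinarith [h4]
    calc (∫ θ in (0:ℝ)..(2 * π),
          ‖1 - Complex.exp (((l - t : ℝ) : ℂ)) *
              Complex.exp (Complex.I * (((θ - θ₀ : ℝ)) : ℂ))‖ ^ (-(3/2) : ℝ))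
        ≤ 2 * |Real.exp (l - t) - 1| ^ (-(3/4) : ℝ) * CF + 8 * π := h1
      _ ≤ 2 * CF * Real.exp 1 * (|l - t| ^ (-(3/4) : ℝ)) + (4 * CF + 8 * π) := by linarith
  have hquarter : l ^ ((1:ℝ)/4) ≤ l + 1 := by
    rcases le_total l 1 with h | h
    · have h' : l ^ ((1:ℝ)/4) ≤ (1:ℝ) ^ ((1:ℝ)/4) :=
        Real.rpow_le_rpow hl.le h (by norm_num)
      rw [Real.one_rpow] at h'
      linarith
    · have h' : l ^ ((1:ℝ)/4) ≤ l ^ (1:ℝ) :=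
        Real.rpow_le_rpow_of_exponent_le h (by norm_num)
      rw [Real.rpow_one] at h'
      linarith
  have hψval : (∫ t in (0:ℝ)..(2*l),
      (2 * CF * Real.exp 1 * (|l - t| ^ (-(3/4) : ℝ)) + (4 * CF + 8 * π)))
      = 2 * CF * Real.exp 1 * (8 * l ^ ((1:ℝ)/4)) + (4 * CF + 8 * π) * (2 * l) := by
    rw [intervalIntegral.integral_add (hwII.const_mul (2 * CF * Real.exp 1))
      intervalIntegrable_const, intervalIntegral.integral_const_mul,
      abs_rpow_integral l hl, intervalIntegral.integral_const]
    simp [smul_eq_mul]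
    ring
  have hfinal : 2 * CF * Real.exp 1 * (8 * l ^ ((1:ℝ)/4)) + (4 * CF + 8 * π) * (2 * l)
      ≤ (16 * CF * Real.exp 1 + 8 * CF + 16 * π + 1) * (l + 1) := by
    have hkey : 16 * (CF * Real.exp 1) * l ^ ((1:ℝ)/4) ≤ 16 * (CF * Real.exp 1) * (l + 1) :=
      mul_le_mul_of_nonneg_left hquarter (by positivity)
    nlinarith [mul_nonneg hCF hl.le, mul_nonneg hCF hE0]
  by_cases hΦ : IntervalIntegrable (fun t : ℝ =>
      ∫ θ in (0:ℝ)..(2 * π),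
        ‖1 - Complex.exp (((l - t : ℝ) : ℂ)) *
            Complex.exp (Complex.I * (((θ - θ₀ : ℝ)) : ℂ))‖ ^ (-(3/2) : ℝ))
      volume 0 (2*l)
  · have hm := intervalIntegral.integral_mono_ae (by linarith : (0:ℝ) ≤ 2*l) hΦ hψII hae
    rw [hψval] at hm
    linarith
  · rw [intervalIntegral.integral_undef hΦ]
    nlinarith [hC, hl]
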